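/- Let (Ω, μ) be a finite probability space, Y : Ω → [0,1], f : Ω → [0,1] with finite range of cardinality m, and B, γ > 0 with m ≥ 2B/α where α = γ·B (equivalently α/B = γ and 1/m ≤ γ/2). Suppose for each v in the range of f with Pr[f = v] ≥ p there exists g_v : Ω → ℝ with E[(f - Y)² - (g_v - Y)² | f = v] ≥ γ, and for the remaining level sets take g_v with E[(f-Y)² - (g_v - Y)² | f = v] ≥ 0. Define f̃(ω) = g_v(ω) on each level set {f = v} where such g_v exists and f̃ = f otherwise. If the total mass of level sets with improvement at least γ is at least q, then E[(f - Y)²] - E[(f̃ - Y)²] ≥ q·γ, and after pointwise rounding of f̃ to the grid of multiples of 1/m in [0,1] the improvement is at least q·γ - 1/m. -/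

import Mathlib

open scoped Classical
open Finset

variable {Ω : Type*}

/-- Probability of an event `S` under weight function `μ` on a finite space. -/
noncomputable def prEv [Fintype Ω] (μ : Ω → ℝ) (S : Set Ω) : ℝ :=
  ∑ ω : Ω, if ω ∈ S then μ ω else 0

/-- Conditional expectation of `g` given the event `S`. -/
noncomputable def cexp [Fintype Ω] (μ : Ω → ℝ) (S : Set Ω) (g : Ω → ℝ) : ℝ :=
  (∑ ω : Ω, if ω ∈ S then μ ω * g ω else 0) / prEv μ S

/-- (Unconditional) expectation of `g`. -/
noncomputable def exv [Fintype Ω] (μ : Ω → ℝ) (g : Ω → ℝ) : ℝ :=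
  ∑ ω : Ω, μ ω * g ω

/-- Rounding to the nearest multiple of 1/m in [0,1]. -/
noncomputable def roundGrid (m : ℕ) (x : ℝ) : ℝ :=
  ((min (m : ℤ) (max 0 (round (x * m)))) : ℝ) / m

lemma roundGrid_sq_le (m : ℕ) (hm : 0 < m) (x y : ℝ) (hy0 : 0 ≤ y) (hy1 : y ≤ 1) :
    (roundGrid m x - y) ^ 2 ≤ (x - y) ^ 2 + 1 / m := by
  have hm' : (0:ℝ) < m := Nat.cast_pos.2 hm
  have h1m : (0:ℝ) < 1 / m := by positivity
  unfold roundGrid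
  push_cast
  rcases lt_or_ge x 0 with hx | hx
  · have h0 : ((round (x * m) : ℤ) : ℝ) ≤ 0 := by
      have : round (x * m) ≤ round (0 : ℝ) := by
        rw [round_eq, round_eq]
        exact Int.floor_le_floor (by nlinarith)
      simp only [round_zero] at this
      exact_mod_cast this
    rw [max_eq_left h0, min_eq_right hm'.le, zero_div]
    nlinarith
  rcases le_or_gt x 1 with hx1 | hx1
  · have hb0 : (0:ℝ) ≤ ((round (x * m) : ℤ) : ℝ) := by
      have : round (0:ℝ) ≤ round (x * m) := by
        rw [round_eq, round_eq]
        exact Int.floor_le_floor (by nlinarith)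
      simp only [round_zero] at this
      exact_mod_cast this
    have hbm : ((round (x * m) : ℤ) : ℝ) ≤ (m:ℝ) := by
      have : round (x * m) ≤ round ((m:ℝ)) := by
        rw [round_eq, round_eq]
        exact Int.floor_le_floor (by nlinarith)
      have h2 : round ((m:ℝ)) = (m:ℤ) := by
        exact_mod_cast round_intCast (α := ℝ) (m:ℤ)
      rw [h2] at this
      exact_mod_cast this
    rw [max_eq_right hb0, min_eq_right hbm]
    have habs : |x * m - round (x * m)| ≤ 1 / 2 := abs_sub_round _
    rw [abs_sub_le_iff] at habs
    set r := ((round (x * m) : ℤ) : ℝ) / m with hrdef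
    have hr0 : (0:ℝ) ≤ r := by positivity
    have hr1 : r ≤ 1 := by rw [hrdef, div_le_one hm']; exact hbm
    have h1 : r - x ≤ 1 / (2 * m) := by
      rw [hrdef, div_sub' hm'.ne', div_le_div_iff₀ hm' (by positivity)]
      nlinarith [habs.1, habs.2]
    have h2 : x - r ≤ 1 / (2 * m) := by
      rw [hrdef, sub_div' hm'.ne', div_le_div_iff₀ hm' (by positivity)]
      nlinarith [habs.1, habs.2]
    have habs1 : |r - x| ≤ 1 / (2 * m) := abs_le.2 ⟨by linarith, h1⟩
    have habs2 : |r + x - 2 * y| ≤ 2 := abs_le.2 ⟨by linarith, by linarith⟩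
    have hmm : |(r - x) * (r + x - 2 * y)| ≤ 1 / (2 * m) * 2 := by
      rw [abs_mul]
      exact mul_le_mul habs1 habs2 (abs_nonneg _) (by positivity)
    have hprod : (r - x) * (r + x - 2 * y) ≤ 1 / m :=
      le_trans (le_abs_self _) (le_trans hmm (le_of_eq (by ring)))
    nlinarith [hprod]
  · have hbm : (m:ℝ) ≤ ((round (x * m) : ℤ) : ℝ) := by
      have : round ((m:ℝ)) ≤ round (x * m) := by
        rw [round_eq, round_eq]
        exact Int.floor_le_floor (by nlinarith)
      have h2 : round ((m:ℝ)) = (m:ℤ) := by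
        exact_mod_cast round_intCast (α := ℝ) (m:ℤ)
      rw [h2] at this
      exact_mod_cast this
    rw [max_eq_right (le_trans hm'.le hbm), min_eq_left hbm, div_self hm'.ne']
    nlinarith [mul_nonneg (by linarith : (0:ℝ) ≤ x - 1) (by linarith : (0:ℝ) ≤ x + 1 - 2 * y)]

/-- level-set improvements of size γ on level sets of total mass q
combine to a total squared-error improvement of qγ, losing at most 1/m to rounding. -/
theorem stmt_18 [Fintype Ω] (μ : Ω → ℝ) (hμ : ∀ ω, 0 ≤ μ ω) (hμ1 : ∑ ω : Ω, μ ω = 1)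
    (Y f : Ω → ℝ) (hY : ∀ ω, Y ω ∈ Set.Icc (0 : ℝ) 1) (hf : ∀ ω, f ω ∈ Set.Icc (0 : ℝ) 1)
    (m : ℕ) (hm : 0 < m) (γ q : ℝ) (hγ : 0 ≤ γ) (hq : 0 ≤ q)
    (g : ℝ → Ω → ℝ)
    (hg0 : ∀ v ∈ Finset.image f Finset.univ,
      0 ≤ cexp μ {ω | f ω = v}
        (fun ω => (f ω - Y ω) ^ 2 - (g v ω - Y ω) ^ 2))
    (V : Finset ℝ) (hV : V ⊆ Finset.image f Finset.univ)
    (hVimp : ∀ v ∈ V,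
      γ ≤ cexp μ {ω | f ω = v}
        (fun ω => (f ω - Y ω) ^ 2 - (g v ω - Y ω) ^ 2))
    (hVmass : q ≤ ∑ v ∈ V, prEv μ {ω | f ω = v}) :
    q * γ ≤ exv μ (fun ω => (f ω - Y ω) ^ 2) -
        exv μ (fun ω => (g (f ω) ω - Y ω) ^ 2) ∧
      q * γ - 1 / (m : ℝ) ≤ exv μ (fun ω => (f ω - Y ω) ^ 2) -
        exv μ (fun ω => (roundGrid m (g (f ω) ω) - Y ω) ^ 2) := by
  set P : ℝ → ℝ := fun v => prEv μ {ω | f ω = v} with hPdef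
  set D : ℝ → ℝ := fun v =>
    ∑ ω : Ω, if f ω = v then μ ω * ((f ω - Y ω) ^ 2 - (g v ω - Y ω) ^ 2) else 0 with hDdef
  have hPnn : ∀ v, 0 ≤ P v := by
    intro v
    apply Finset.sum_nonneg
    intro ω _
    split <;> simp [hμ ω]
  have hcexp : ∀ v, cexp μ {ω | f ω = v}
      (fun ω => (f ω - Y ω) ^ 2 - (g v ω - Y ω) ^ 2) = D v / P v := by
    intro v
    simp only [cexp, hDdef, hPdef, Set.mem_setOf_eq]
  have hDzero : ∀ v, P v = 0 → D v = 0 := by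
    intro v hP
    have hμ0 : ∀ ω, f ω = v → μ ω = 0 := by
      intro ω hfω
      have := (Finset.sum_eq_zero_iff_of_nonneg (by
        intro ω' _; split <;> simp [hμ ω'])).1 hP ω (Finset.mem_univ ω)
      simpa [Set.mem_setOf_eq, hfω] using this
    apply Finset.sum_eq_zero
    intro ω _
    split
    · next h => simp [hμ0 ω h]
    · rfl
  have hD0 : ∀ v ∈ Finset.image f Finset.univ, 0 ≤ D v := by
    intro v hv
    rcases eq_or_lt_of_le (hPnn v) with hP | hP
    · rw [hDzero v hP.symm]
    · have h := hg0 v hv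
      rw [hcexp v] at h
      have := mul_nonneg h (hPnn v)
      rwa [div_mul_cancel₀ _ hP.ne'] at this
  have hDγ : ∀ v ∈ V, γ * P v ≤ D v := by
    intro v hv
    rcases eq_or_lt_of_le (hPnn v) with hP | hP
    · simp [hDzero v hP.symm, ← hP]
    · have h := hVimp v hv
      rw [hcexp v] at h
      exact (le_div_iff₀ hP).1 h
  have hsplit : exv μ (fun ω => (f ω - Y ω) ^ 2) -
      exv μ (fun ω => (g (f ω) ω - Y ω) ^ 2) =
      ∑ v ∈ Finset.image f Finset.univ, D v := by
    have h1 : ∀ v, D v = ∑ ω ∈ Finset.univ.filter (fun ω => f ω = v),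
        μ ω * ((f ω - Y ω) ^ 2 - (g (f ω) ω - Y ω) ^ 2) := by
      intro v
      rw [hDdef]
      rw [Finset.sum_filter]
      apply Finset.sum_congr rfl
      intro ω _
      split
      · next h => rw [h]
      · rfl
    calc exv μ (fun ω => (f ω - Y ω) ^ 2) -
          exv μ (fun ω => (g (f ω) ω - Y ω) ^ 2)
        = ∑ ω : Ω, μ ω * ((f ω - Y ω) ^ 2 - (g (f ω) ω - Y ω) ^ 2) := by
          simp only [exv, mul_sub, Finset.sum_sub_distrib]
      _ = ∑ v ∈ Finset.image f Finset.univ, ∑ ω ∈ Finset.univ.filter (fun ω => f ω = v),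
            μ ω * ((f ω - Y ω) ^ 2 - (g (f ω) ω - Y ω) ^ 2) :=
          (Finset.sum_fiberwise_of_maps_to
            (fun ω _ => Finset.mem_image_of_mem f (Finset.mem_univ ω)) _).symm
      _ = ∑ v ∈ Finset.image f Finset.univ, D v := by
          exact Finset.sum_congr rfl fun v _ => (h1 v).symm
  have hpart1 : q * γ ≤ exv μ (fun ω => (f ω - Y ω) ^ 2) -
      exv μ (fun ω => (g (f ω) ω - Y ω) ^ 2) := by
    rw [hsplit]
    calc q * γ = γ * q := mul_comm q γ
      _ ≤ γ * ∑ v ∈ V, P v := by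
          exact mul_le_mul_of_nonneg_left hVmass hγ
      _ = ∑ v ∈ V, γ * P v := Finset.mul_sum _ _ _
      _ ≤ ∑ v ∈ V, D v := Finset.sum_le_sum hDγ
      _ ≤ ∑ v ∈ Finset.image f Finset.univ, D v :=
          Finset.sum_le_sum_of_subset_of_nonneg hV (fun v hv _ => hD0 v hv)
  refine ⟨hpart1, ?_⟩
  have hround : exv μ (fun ω => (roundGrid m (g (f ω) ω) - Y ω) ^ 2) ≤
      exv μ (fun ω => (g (f ω) ω - Y ω) ^ 2) + 1 / m := by
    calc exv μ (fun ω => (roundGrid m (g (f ω) ω) - Y ω) ^ 2)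
        ≤ ∑ ω : Ω, μ ω * ((g (f ω) ω - Y ω) ^ 2 + 1 / m) := by
          apply Finset.sum_le_sum
          intro ω _
          exact mul_le_mul_of_nonneg_left
            (roundGrid_sq_le m hm _ _ (hY ω).1 (hY ω).2) (hμ ω)
      _ = exv μ (fun ω => (g (f ω) ω - Y ω) ^ 2) + 1 / m := by
          simp only [mul_add, Finset.sum_add_distrib, exv, ← Finset.sum_mul, hμ1, one_mul]
  linarith
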